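/- Let r : ℂ × ℂ → ℂ be analytic on an open neighborhood of (0,0), let m ≥ 0, and for (x, a) = (x, a_0, …, a_m) near 0 in ℂ × ℂ^{m+1} define h(x, a) := r(x, Σ_{i=0}^m a_i x^i). For each nonnegative integer i define h_i(a) := (1/i!) · (∂^i h/∂x^i)(0, a), a holomorphic function of a on a neighborhood of 0 in ℂ^{m+1}. Then for all nonnegative integers i, j, k with 0 ≤ j ≤ m and 0 ≤ k + j − i ≤ m, the identity ∂h_i/∂a_j = ∂h_k/∂a_{k+j−i} holds on a neighborhood of 0 in ℂ^{m+1}. -/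

import Mathlib

open Filter

namespace PDTCS

variable {E : Type*} [NormedAddCommGroup E] [NormedSpace ℂ E]

lemma hasDerivAt_slice_fst {Φ : ℂ × E → ℂ} {x : ℂ} {a : E}
    (hΦ : DifferentiableAt ℂ Φ (x, a)) :
    HasDerivAt (fun x' => Φ (x', a)) (fderiv ℂ Φ (x, a) (1, 0)) x := by
  have h1 : HasFDerivAt (fun x' : ℂ => (x', a)) (ContinuousLinearMap.inl ℂ ℂ E) x :=
    hasFDerivAt_prodMk_left x a
  have h2 := (hΦ.hasFDerivAt.comp x h1).hasDerivAt
  exact h2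

lemma hasFDerivAt_slice_snd {Φ : ℂ × E → ℂ} {x : ℂ} {a : E}
    (hΦ : DifferentiableAt ℂ Φ (x, a)) :
    HasFDerivAt (fun a' => Φ (x, a'))
      ((fderiv ℂ Φ (x, a)).comp (ContinuousLinearMap.inr ℂ ℂ E)) a := by
  have h1 : HasFDerivAt (fun a' : E => ((x : ℂ), a')) (ContinuousLinearMap.inr ℂ ℂ E) a :=
    hasFDerivAt_prodMk_right x a
  exact hΦ.hasFDerivAt.comp a h1

lemma analyticOnNhd_fderiv_apply {Φ : ℂ × E → ℂ} {U : Set (ℂ × E)}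
    (hΦ : AnalyticOnNhd ℂ Φ U) (w : ℂ × E) :
    AnalyticOnNhd ℂ (fun z => fderiv ℂ Φ z w) U :=
  fun z hz => ((ContinuousLinearMap.apply ℂ ℂ w).analyticAt _).comp (hΦ z hz).fderiv

lemma analyticOnNhd_derivX {Φ : ℂ × E → ℂ} {U : Set (ℂ × E)} (hU : IsOpen U)
    (hΦ : AnalyticOnNhd ℂ Φ U) :
    AnalyticOnNhd ℂ (fun z : ℂ × E => deriv (fun x' => Φ (x', z.2)) z.1) U := by
  intro z hz
  apply (analyticOnNhd_fderiv_apply hΦ ((1 : ℂ), (0 : E)) z hz).congr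
  filter_upwards [hU.mem_nhds hz] with z' hz'
  have h1 : DifferentiableAt ℂ Φ (z'.1, z'.2) := by
    rw [Prod.mk.eta]; exact (hΦ z' hz').differentiableAt
  have := (hasDerivAt_slice_fst h1).deriv
  rw [this, Prod.mk.eta]

lemma analyticOnNhd_iteratedDerivX {U : Set (ℂ × E)} (hU : IsOpen U) :
    ∀ (i : ℕ) (Φ : ℂ × E → ℂ), AnalyticOnNhd ℂ Φ U →
      AnalyticOnNhd ℂ (fun z : ℂ × E => iteratedDeriv i (fun x' => Φ (x', z.2)) z.1) U := by
  intro i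
  induction i with
  | zero =>
    intro Φ hΦ
    simpa [iteratedDeriv_zero] using hΦ
  | succ n IH =>
    intro Φ hΦ
    have key := IH _ (analyticOnNhd_derivX hU hΦ)
    simp only [iteratedDeriv_succ']
    exact key

lemma clairaut {Φ : ℂ × E → ℂ} {U : Set (ℂ × E)} (hU : IsOpen U)
    (hΦ : AnalyticOnNhd ℂ Φ U) {x : ℂ} {a : E} (hz : (x, a) ∈ U) (v : E) :
    fderiv ℂ (fun a' => deriv (fun x' => Φ (x', a')) x) a v
      = deriv (fun x' => fderiv ℂ (fun a' => Φ (x', a')) a v) x := by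
  set T := fderiv ℂ (fderiv ℂ Φ) (x, a) with hT
  have hf' : AnalyticAt ℂ (fderiv ℂ Φ) (x, a) := (hΦ _ hz).fderiv
  have hT' : HasFDerivAt (fderiv ℂ Φ) T (x, a) := hf'.differentiableAt.hasFDerivAt
  have hsymm : ∀ u w : ℂ × E, T u w = T w u := by
    intro u w
    apply second_derivative_symmetric_of_eventually (f := Φ) (x := (x, a)) ?_ hT'
    filter_upwards [hU.mem_nhds hz] with y hy using (hΦ y hy).differentiableAt.hasFDerivAt
  have hmemA : ∀ᶠ a' in nhds a, (x, a') ∈ U := by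
    have hc : ContinuousAt (fun a' : E => ((x : ℂ), a')) a :=
      (continuous_const.prodMk continuous_id).continuousAt
    exact hc.preimage_mem_nhds (hU.mem_nhds hz)
  have e1 : (fun a' => deriv (fun x' => Φ (x', a')) x) =ᶠ[nhds a]
      (fun a' => fderiv ℂ Φ (x, a') ((1 : ℂ), (0 : E))) := by
    filter_upwards [hmemA] with a' ha'
    exact (hasDerivAt_slice_fst (hΦ _ ha').differentiableAt).deriv
  have hL : HasFDerivAt (fun a' => fderiv ℂ Φ (x, a') ((1 : ℂ), (0 : E)))
      ((ContinuousLinearMap.apply ℂ ℂ ((1 : ℂ), (0 : E))).comp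
        (T.comp (ContinuousLinearMap.inr ℂ ℂ E))) a := by
    have h1 := hT'.comp a (hasFDerivAt_prodMk_right x a)
    exact (ContinuousLinearMap.apply ℂ ℂ ((1 : ℂ), (0 : E))).hasFDerivAt.comp a h1
  have LHS : fderiv ℂ (fun a' => deriv (fun x' => Φ (x', a')) x) a v = T (0, v) (1, 0) := by
    rw [e1.fderiv_eq, hL.fderiv]; simp
  have hmemX : ∀ᶠ x' in nhds x, (x', a) ∈ U := by
    have hc : ContinuousAt (fun x' : ℂ => (x', a)) x :=
      (continuous_id.prodMk continuous_const).continuousAt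
    exact hc.preimage_mem_nhds (hU.mem_nhds hz)
  have e2 : (fun x' => fderiv ℂ (fun a' => Φ (x', a')) a v) =ᶠ[nhds x]
      (fun x' => fderiv ℂ Φ (x', a) ((0 : ℂ), v)) := by
    filter_upwards [hmemX] with x' hx'
    rw [(hasFDerivAt_slice_snd (hΦ _ hx').differentiableAt).fderiv]; simp
  have hR : HasDerivAt (fun x' => fderiv ℂ Φ (x', a) ((0 : ℂ), v)) (T (1, 0) (0, v)) x := by
    have h1 := hT'.comp x (hasFDerivAt_prodMk_left (𝕜 := ℂ) x a)
    have h2 := ((ContinuousLinearMap.apply ℂ ℂ ((0 : ℂ), v)).hasFDerivAt.comp x h1).hasDerivAt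
    exact h2
  rw [LHS, e2.deriv_eq, hR.deriv]
  exact hsymm _ _

lemma swap_lemma {U : Set (ℂ × E)} (hU : IsOpen U) :
    ∀ (i : ℕ) (Φ : ℂ × E → ℂ), AnalyticOnNhd ℂ Φ U → ∀ {x : ℂ} {a : E}, (x, a) ∈ U → ∀ v : E,
      fderiv ℂ (fun a' => iteratedDeriv i (fun x' => Φ (x', a')) x) a v
        = iteratedDeriv i (fun x' => fderiv ℂ (fun a' => Φ (x', a')) a v) x := by
  intro i
  induction i with
  | zero => intro Φ hΦ x a hz v; simp [iteratedDeriv_zero]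
  | succ n IH =>
    intro Φ hΦ x a hz v
    have hDx := analyticOnNhd_derivX hU hΦ
    have step1 : (fun a' => iteratedDeriv (n + 1) (fun x' => Φ (x', a')) x)
        = fun a' => iteratedDeriv n (fun x' => deriv (fun x'' => Φ (x'', a')) x') x := by
      funext a'; rw [iteratedDeriv_succ']
    rw [step1]
    have e : fderiv ℂ (fun a' => iteratedDeriv n (fun x' => deriv (fun x'' => Φ (x'', a')) x') x) a v
        = iteratedDeriv n (fun x' => fderiv ℂ (fun a' => deriv (fun x'' => Φ (x'', a')) x') a v) x :=
      IH (fun z => deriv (fun x'' => Φ (x'', z.2)) z.1) hDx hz v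
    rw [e]
    have hmemX : ∀ᶠ x' in nhds x, (x', a) ∈ U := by
      have hc : ContinuousAt (fun x' : ℂ => (x', a)) x :=
        (continuous_id.prodMk continuous_const).continuousAt
      exact hc.preimage_mem_nhds (hU.mem_nhds hz)
    have e2 : (fun x' => fderiv ℂ (fun a' => deriv (fun x'' => Φ (x'', a')) x') a v)
        =ᶠ[nhds x] (fun x' => deriv (fun x'' => fderiv ℂ (fun a' => Φ (x'', a')) a v) x') := by
      filter_upwards [hmemX] with x' hx'
      exact clairaut hU hΦ hx' v
    rw [e2.iteratedDeriv_eq n, ← iteratedDeriv_succ']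

lemma iteratedDerivWithin_eq_iteratedDeriv_of_isOpen {f : ℂ → ℂ} {s : Set ℂ} (hs : IsOpen s)
    {x : ℂ} (hx : x ∈ s) (n : ℕ) : iteratedDerivWithin n f s x = iteratedDeriv n f x := by
  rw [iteratedDerivWithin, iteratedDeriv, iteratedFDerivWithin_of_isOpen n hs hx]

lemma analyticAt_deriv {f : ℂ → ℂ} {x : ℂ} (hf : AnalyticAt ℂ f x) :
    AnalyticAt ℂ (deriv f) x := by
  have h1 : AnalyticAt ℂ (fun y => fderiv ℂ f y 1) x :=
    ((ContinuousLinearMap.apply ℂ ℂ (1 : ℂ)).analyticAt _).comp hf.fderiv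
  apply h1.congr
  filter_upwards with y
  exact fderiv_apply_one_eq_deriv

lemma iteratedDeriv_add_at {f g : ℂ → ℂ} {x : ℂ} (hf : AnalyticAt ℂ f x)
    (hg : AnalyticAt ℂ g x) (n : ℕ) :
    iteratedDeriv n (fun y => f y + g y) x = iteratedDeriv n f x + iteratedDeriv n g x := by
  obtain ⟨s, hsub, hopen, hxs⟩ :=
    mem_nhds_iff.mp (hf.eventually_analyticAt.and hg.eventually_analyticAt)
  have hfa : AnalyticOnNhd ℂ f s := fun y hy => (hsub hy).1
  have hga : AnalyticOnNhd ℂ g s := fun y hy => (hsub hy).2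
  have hfs : ContDiffOn ℂ n f s := hfa.contDiffOn hopen.uniqueDiffOn
  have hgs : ContDiffOn ℂ n g s := hga.contDiffOn hopen.uniqueDiffOn
  have key := iteratedDerivWithin_add hxs hopen.uniqueDiffOn (hfs x hxs) (hgs x hxs)
  rw [iteratedDerivWithin_eq_iteratedDeriv_of_isOpen hopen hxs,
    iteratedDerivWithin_eq_iteratedDeriv_of_isOpen hopen hxs,
    iteratedDerivWithin_eq_iteratedDeriv_of_isOpen hopen hxs] at key
  exact key

lemma iteratedDeriv_id_mul {v : ℂ → ℂ} (hv : AnalyticAt ℂ v 0) (n : ℕ) :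
    iteratedDeriv n (fun x => x * v x) 0 = n * iteratedDeriv (n - 1) v 0 := by
  induction n generalizing v with
  | zero => simp [iteratedDeriv_zero]
  | succ n IH =>
    have hv' : AnalyticAt ℂ (deriv v) 0 := analyticAt_deriv hv
    have e1 : deriv (fun y => y * v y) =ᶠ[nhds (0 : ℂ)] (fun x => v x + x * deriv v x) := by
      filter_upwards [hv.eventually_analyticAt] with x hx
      rw [deriv_fun_mul differentiableAt_fun_id hx.differentiableAt]
      simp
    have hxdv : AnalyticAt ℂ (fun x : ℂ => x * deriv v x) 0 := analyticAt_id.mul hv'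
    rw [iteratedDeriv_succ', e1.iteratedDeriv_eq n,
      iteratedDeriv_add_at hv hxdv n, IH hv']
    cases n with
    | zero => simp
    | succ p =>
      rw [show p + 1 - 1 = p from rfl, ← iteratedDeriv_succ']
      push_cast
      ring

lemma iteratedDeriv_pow_mul {u : ℂ → ℂ} (hu : AnalyticAt ℂ u 0) (s : ℕ) :
    ∀ n, iteratedDeriv n (fun x => x ^ s * u x) 0
      = (n.descFactorial s : ℂ) * iteratedDeriv (n - s) u 0 := by
  induction s generalizing u with
  | zero => intro n; simp
  | succ s IH =>
    intro n
    have heq : (fun x : ℂ => x ^ (s + 1) * u x) = (fun x => x * (x ^ s * u x)) := by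
      funext x; ring
    have hpow : AnalyticAt ℂ (fun x : ℂ => x ^ s * u x) 0 := (analyticAt_id.pow s).mul hu
    rw [heq, iteratedDeriv_id_mul hpow n, IH hu (n - 1)]
    have hidx : n - 1 - s = n - (s + 1) := by omega
    rw [hidx]
    cases n with
    | zero => simp
    | succ p =>
      rw [Nat.succ_descFactorial_succ, show p + 1 - 1 = p from rfl]
      push_cast
      ring

end PDTCS

open PDTCS in
/-- Let `r : ℂ × ℂ → ℂ` be analytic near `(0,0)`, `m ≥ 0`, and for
`(x, a)` near `0` in `ℂ × ℂ^{m+1}` set `h(x, a) := r(x, ∑_{l=0}^m a_l x^l)`.  For `i ≥ 0` let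
`h_i(a) := (1/i!) · (∂^i h/∂x^i)(0, a)`.  Then for all `i, j, k` with `0 ≤ j ≤ m` and
`0 ≤ k + j − i ≤ m`, the identity `∂h_i/∂a_j = ∂h_k/∂a_{k+j−i}` holds on a neighborhood of
`0` in `ℂ^{m+1}`. -/
theorem pderiv_taylorCoeff_symm (m : ℕ) (r : ℂ × ℂ → ℂ) (hr : AnalyticAt ℂ r (0, 0))
    (h : ℂ → (Fin (m + 1) → ℂ) → ℂ)
    (hdef : ∀ x a, h x a = r (x, ∑ l : Fin (m + 1), a l * x ^ (l : ℕ)))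
    (hc : ℕ → (Fin (m + 1) → ℂ) → ℂ)
    (hcdef : ∀ i a, hc i a = (1 / (i.factorial : ℂ)) * iteratedDeriv i (fun x => h x a) 0)
    (i j k : ℕ) (hj : j ≤ m) (hik : i ≤ k + j) (hkji : k + j - i ≤ m) :
    ∀ᶠ a in nhds (0 : Fin (m + 1) → ℂ),
      fderiv ℂ (hc i) a (Pi.single (⟨j, by omega⟩ : Fin (m + 1)) 1) =
        fderiv ℂ (hc k) a (Pi.single (⟨k + j - i, by omega⟩ : Fin (m + 1)) 1) := by
  obtain ⟨V, hVsub, hVopen, hV0⟩ := mem_nhds_iff.mp hr.eventually_analyticAt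
  have hΨ : ∀ z : ℂ × (Fin (m + 1) → ℂ),
      AnalyticAt ℂ (fun z : ℂ × (Fin (m + 1) → ℂ) =>
        ((z.1 : ℂ), ∑ l : Fin (m + 1), z.2 l * z.1 ^ (l : ℕ))) z := by
    intro z
    apply AnalyticAt.prod
    · exact (ContinuousLinearMap.fst ℂ ℂ (Fin (m + 1) → ℂ)).analyticAt z
    · apply Finset.analyticAt_fun_sum
      intro l _
      exact (((ContinuousLinearMap.proj (R := ℂ) (φ := fun _ : Fin (m + 1) => ℂ) l).comp
          (ContinuousLinearMap.snd ℂ ℂ (Fin (m + 1) → ℂ))).analyticAt z).mul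
        (((ContinuousLinearMap.fst ℂ ℂ (Fin (m + 1) → ℂ)).analyticAt z).pow (l : ℕ))
  set U : Set (ℂ × (Fin (m + 1) → ℂ)) :=
    (fun z : ℂ × (Fin (m + 1) → ℂ) =>
      ((z.1 : ℂ), ∑ l : Fin (m + 1), z.2 l * z.1 ^ (l : ℕ))) ⁻¹' V with hUdef
  have hUopen : IsOpen U := hVopen.preimage
    (continuous_iff_continuousAt.mpr fun z => (hΨ z).continuousAt)
  have hU0 : ((0 : ℂ), (0 : Fin (m + 1) → ℂ)) ∈ U := by
    have : (((0 : ℂ)), ∑ l : Fin (m + 1), (0 : Fin (m + 1) → ℂ) l * (0 : ℂ) ^ (l : ℕ))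
        = ((0 : ℂ), (0 : ℂ)) := by simp
    show (((0 : ℂ)), ∑ l : Fin (m + 1), (0 : Fin (m + 1) → ℂ) l * (0 : ℂ) ^ (l : ℕ)) ∈ V
    rw [this]; exact hV0
  have hH : AnalyticOnNhd ℂ (fun z : ℂ × (Fin (m + 1) → ℂ) => h z.1 z.2) U := by
    intro z hz
    have h1 : AnalyticAt ℂ (fun z : ℂ × (Fin (m + 1) → ℂ) =>
        r ((z.1 : ℂ), ∑ l : Fin (m + 1), z.2 l * z.1 ^ (l : ℕ))) z :=
      AnalyticAt.comp (hVsub hz) (hΨ z)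
    apply h1.congr
    filter_upwards with z'
    exact (hdef z'.1 z'.2).symm
  have hmem : ∀ᶠ a in nhds (0 : Fin (m + 1) → ℂ), ((0 : ℂ), a) ∈ U := by
    have hca : ContinuousAt (fun a : Fin (m + 1) → ℂ => ((0 : ℂ), a)) 0 :=
      (continuous_const.prodMk continuous_id).continuousAt
    exact hca.preimage_mem_nhds (hUopen.mem_nhds hU0)
  filter_upwards [hmem] with a ha
  have hmemX : ∀ᶠ x' in nhds (0 : ℂ), (x', a) ∈ U := by
    have hcx : ContinuousAt (fun x' : ℂ => (x', a)) 0 :=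
      (continuous_id.prodMk continuous_const).continuousAt
    exact hcx.preimage_mem_nhds (hUopen.mem_nhds ha)
  have hu : AnalyticAt ℂ (fun x : ℂ =>
      fderiv ℂ r ((x : ℂ), ∑ l : Fin (m + 1), a l * x ^ (l : ℕ)) ((0 : ℂ), (1 : ℂ))) 0 := by
    have hA : AnalyticAt ℂ (fun z : ℂ × (Fin (m + 1) → ℂ) =>
        ((z.1 : ℂ), ∑ l : Fin (m + 1), z.2 l * z.1 ^ (l : ℕ))) ((0 : ℂ), a) := hΨ _
    have hra : AnalyticAt ℂ r
        (((0 : ℂ)), ∑ l : Fin (m + 1), a l * (0 : ℂ) ^ (l : ℕ)) := hVsub ha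
    have hB : AnalyticAt ℂ (fderiv ℂ r)
        (((0 : ℂ)), ∑ l : Fin (m + 1), a l * (0 : ℂ) ^ (l : ℕ)) := hra.fderiv
    have hC : AnalyticAt ℂ (fun z : ℂ × (Fin (m + 1) → ℂ) =>
        fderiv ℂ r ((z.1 : ℂ), ∑ l : Fin (m + 1), z.2 l * z.1 ^ (l : ℕ))) ((0 : ℂ), a) :=
      AnalyticAt.comp (f := fun z : ℂ × (Fin (m + 1) → ℂ) =>
        ((z.1 : ℂ), ∑ l : Fin (m + 1), z.2 l * z.1 ^ (l : ℕ))) (x := ((0 : ℂ), a)) hB hA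
    have hD : AnalyticAt ℂ (fun z : ℂ × (Fin (m + 1) → ℂ) =>
        fderiv ℂ r ((z.1 : ℂ), ∑ l : Fin (m + 1), z.2 l * z.1 ^ (l : ℕ)) ((0 : ℂ), (1 : ℂ)))
        ((0 : ℂ), a) :=
      ((ContinuousLinearMap.apply ℂ ℂ ((0 : ℂ), (1 : ℂ))).analyticAt _).comp hC
    have h2 : AnalyticAt ℂ (fun x : ℂ => ((x : ℂ), a)) 0 :=
      analyticAt_id.prod analyticAt_const
    exact AnalyticAt.comp (f := fun x : ℂ => ((x : ℂ), a)) (x := (0 : ℂ)) hD h2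
  have side : ∀ (i' jn : ℕ) (hjn : jn < m + 1),
      fderiv ℂ (hc i') a (Pi.single (⟨jn, hjn⟩ : Fin (m + 1)) 1)
        = (1 / (i'.factorial : ℂ)) * ((i'.descFactorial jn : ℂ) *
            iteratedDeriv (i' - jn) (fun x : ℂ =>
              fderiv ℂ r ((x : ℂ), ∑ l : Fin (m + 1), a l * x ^ (l : ℕ)) ((0 : ℂ), (1 : ℂ))) 0) := by
    intro i' jn hjn
    have hhc : hc i' = fun a' => (1 / (i'.factorial : ℂ)) * iteratedDeriv i' (fun x => h x a') 0 :=
      funext fun a' => hcdef i' a'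
    have hdiffF : DifferentiableAt ℂ
        (fun a' : Fin (m + 1) → ℂ => iteratedDeriv i' (fun x => h x a') 0) a :=
      ((analyticOnNhd_iteratedDerivX hUopen i' _ hH ((0 : ℂ), a) ha).comp
        (analyticAt_const.prod analyticAt_id)).differentiableAt
    have hswap : fderiv ℂ (fun a' : Fin (m + 1) → ℂ => iteratedDeriv i' (fun x => h x a') 0) a
          (Pi.single (⟨jn, hjn⟩ : Fin (m + 1)) 1)
        = iteratedDeriv i' (fun x' => fderiv ℂ (fun a' => h x' a') a
            (Pi.single (⟨jn, hjn⟩ : Fin (m + 1)) 1)) 0 :=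
      swap_lemma hUopen i' _ hH ha (Pi.single (⟨jn, hjn⟩ : Fin (m + 1)) 1)
    rw [hhc, fderiv_const_mul hdiffF, ContinuousLinearMap.smul_apply, smul_eq_mul, hswap]
    congr 1
    have e3 : (fun x' => fderiv ℂ (fun a' => h x' a') a
          (Pi.single (⟨jn, hjn⟩ : Fin (m + 1)) 1))
        =ᶠ[nhds (0 : ℂ)] fun x' => x' ^ jn *
            fderiv ℂ r ((x' : ℂ), ∑ l : Fin (m + 1), a l * x' ^ (l : ℕ)) ((0 : ℂ), (1 : ℂ)) := by
      filter_upwards [hmemX] with x' hx'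
      set L : (Fin (m + 1) → ℂ) →L[ℂ] ℂ :=
        ∑ l : Fin (m + 1), x' ^ (l : ℕ) •
          ContinuousLinearMap.proj (R := ℂ) (φ := fun _ : Fin (m + 1) => ℂ) l with hLdef
      have hLfun : (fun a' : Fin (m + 1) → ℂ => ∑ l : Fin (m + 1), a' l * x' ^ (l : ℕ)) = ⇑L := by
        funext a'
        simp [hLdef, ContinuousLinearMap.sum_apply, mul_comm]
      have hι : HasFDerivAt (fun a' : Fin (m + 1) → ℂ =>
            ((x' : ℂ), ∑ l : Fin (m + 1), a' l * x' ^ (l : ℕ)))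
          ((0 : (Fin (m + 1) → ℂ) →L[ℂ] ℂ).prod L) a := by
        apply HasFDerivAt.prodMk (hasFDerivAt_const x' a)
        rw [hLfun]; exact L.hasFDerivAt
      have hrd : HasFDerivAt r
          (fderiv ℂ r ((x' : ℂ), ∑ l : Fin (m + 1), a l * x' ^ (l : ℕ)))
          ((x' : ℂ), ∑ l : Fin (m + 1), a l * x' ^ (l : ℕ)) :=
        (hVsub hx' : AnalyticAt ℂ r _).differentiableAt.hasFDerivAt
      have hcomp := hrd.comp a hι
      have hfn : (fun a' : Fin (m + 1) → ℂ => h x' a')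
          = fun a' : Fin (m + 1) → ℂ => r ((x' : ℂ), ∑ l : Fin (m + 1), a' l * x' ^ (l : ℕ)) :=
        funext fun a' => hdef x' a'
      have hfd : fderiv ℂ (fun a' : Fin (m + 1) → ℂ => h x' a') a
          = (fderiv ℂ r ((x' : ℂ), ∑ l : Fin (m + 1), a l * x' ^ (l : ℕ))).comp
              ((0 : (Fin (m + 1) → ℂ) →L[ℂ] ℂ).prod L) := by
        rw [hfn]; exact hcomp.fderiv
      rw [hfd, ContinuousLinearMap.comp_apply]
      have hval : ((0 : (Fin (m + 1) → ℂ) →L[ℂ] ℂ).prod L)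
            (Pi.single (⟨jn, hjn⟩ : Fin (m + 1)) 1)
          = ((0 : ℂ), x' ^ jn) := by
        have hLs : L (Pi.single (⟨jn, hjn⟩ : Fin (m + 1)) 1) = x' ^ jn := by
          simp [hLdef, ContinuousLinearMap.sum_apply, Pi.single_apply, smul_ite,
            Finset.sum_ite_eq', mul_ite]
        simp [ContinuousLinearMap.prod_apply, hLs]
      rw [hval, show ((0 : ℂ), x' ^ jn) = x' ^ jn • ((0 : ℂ), (1 : ℂ)) by simp,
        ContinuousLinearMap.map_smul, smul_eq_mul]
    rw [e3.iteratedDeriv_eq i', iteratedDeriv_pow_mul hu jn i']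
  rw [side i j (by omega), side k (k + j - i) (by omega)]
  by_cases hij : j ≤ i
  · have hidx : k - (k + j - i) = i - j := by omega
    rw [hidx]
    have h1 : (((i - j).factorial : ℂ)) * (i.descFactorial j : ℂ) = (i.factorial : ℂ) := by
      exact_mod_cast congrArg (Nat.cast : ℕ → ℂ) (Nat.factorial_mul_descFactorial hij)
    have h2 : (((i - j).factorial : ℂ)) * (k.descFactorial (k + j - i) : ℂ)
        = (k.factorial : ℂ) := by
      have h' : k + j - i ≤ k := by omega
      have h'' := Nat.factorial_mul_descFactorial h'
      rw [hidx] at h''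
      exact_mod_cast congrArg (Nat.cast : ℕ → ℂ) h''
    have hi0 : (i.factorial : ℂ) ≠ 0 := Nat.cast_ne_zero.mpr i.factorial_ne_zero
    have hk0 : (k.factorial : ℂ) ≠ 0 := Nat.cast_ne_zero.mpr k.factorial_ne_zero
    have hsc : (1 / (i.factorial : ℂ)) * (i.descFactorial j : ℂ)
        = (1 / (k.factorial : ℂ)) * (k.descFactorial (k + j - i) : ℂ) := by
      rw [div_mul_eq_mul_div, div_mul_eq_mul_div, div_eq_div_iff hi0 hk0]
      linear_combination ((k.descFactorial (k + j - i) : ℂ)) * h1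
        - ((i.descFactorial j : ℂ)) * h2
    rw [← mul_assoc, ← mul_assoc, hsc]
  · have hd1 : i.descFactorial j = 0 := Nat.descFactorial_eq_zero_iff_lt.mpr (by omega)
    have hd2 : k.descFactorial (k + j - i) = 0 :=
      Nat.descFactorial_eq_zero_iff_lt.mpr (by omega)
    rw [hd1, hd2]
    simp
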